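/- Let Σ be a finite alphabet, D0 and D1 probability distributions on Σ^n, K ≥ 1, and T a deterministic decision tree on inputs in (Σ^n)^K (possibly containing dummy vertices that make no query and have a single child) such that T never queries a sample that is settled, where sample j is settled at a vertex v if LR(v_j) := D1(v_j)/D0(v_j) ∉ [e^{−100}, e^{100}]. For x drawn from D1^K, let v^0 → v^1 → ⋯ be the computation path of T on x, and set Δ^t := OTLLR(v^{t+1}) − OTLLR(v^t). Then for every non-leaf vertex v at distance t from the root that is reached with positive probability under D1^K: E[Δ^t | v^t = v] ≥ 0.001 · E[(Δ^t)² | v^t = v] ≥ 0. -/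

import Mathlib

open Finset

/-- A deterministic decision tree over alphabet `α`, querying positions `ι`, with output
labels `β`; `dummy` vertices make no query and have a single child. -/
inductive DTreeD (α ι β : Type) : Type where
  | leaf : β → DTreeD α ι β
  | node : ι → (α → DTreeD α ι β) → DTreeD α ι β
  | dummy : DTreeD α ι β → DTreeD α ι β

/-- Probability mass of a set `S` under (the mass function of) a distribution `D`. -/
noncomputable def prS {γ : Type} [Fintype γ] (D : γ → ℝ) (S : Set γ) : ℝ :=
  ∑ x, S.indicator D x

/-- `D` is a probability mass function on the finite type `γ`. -/
def IsDist {γ : Type} [Fintype γ] (D : γ → ℝ) : Prop :=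
  (∀ x, 0 ≤ D x) ∧ ∑ x, D x = 1

/-- Likelihood ratio `LR(S) = D1(S)/D0(S)`. -/
noncomputable def LR {γ : Type} [Fintype γ] (D0 D1 : γ → ℝ) (S : Set γ) : ℝ :=
  prS D1 S / prS D0 S

/-- The `K`-fold product distribution `D^K` (input flattened). -/
noncomputable def prodD {α : Type} {n K : ℕ} (D : (Fin n → α) → ℝ) :
    ((Fin K × Fin n) → α) → ℝ :=
  fun x => ∏ j, D fun i => x (j, i)

/-- Sample `j` with current consistent set `S` is settled if `LR(S) ∉ [e^{−100}, e^{100}]`. -/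
def Settled {γ : Type} [Fintype γ] (D0 D1 : γ → ℝ) (S : Set γ) : Prop :=
  ¬ (Real.exp (-100) ≤ LR D0 D1 S ∧ LR D0 D1 S ≤ Real.exp 100)

/-- Truncated log likelihood ratio: `log LR(S)` if `|log LR(S)| ≤ 100` (i.e. `LR(S)` lies in
`[e^{−100}, e^{100}]`), and `500` otherwise. -/
noncomputable def tllr {γ : Type} [Fintype γ] (D0 D1 : γ → ℝ) (S : Set γ) : ℝ :=
  if Real.exp (-100) ≤ LR D0 D1 S ∧ LR D0 D1 S ≤ Real.exp 100 then
    Real.log (LR D0 D1 S)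
  else 500

/-- `OTLLR(v) = ∑_j TLLR(v_j)`. -/
noncomputable def otllr {α : Type} [Fintype α] {n K : ℕ} (D0 D1 : (Fin n → α) → ℝ)
    (Inp : Fin K → Set (Fin n → α)) : ℝ :=
  ∑ j, tllr D0 D1 (Inp j)

/-- `Input(v) = v_1 × ⋯ × v_K` viewed as a set of (flattened) inputs. -/
def InpSet {α : Type} {n K : ℕ} (Inp : Fin K → Set (Fin n → α)) :
    Set ((Fin K × Fin n) → α) :=
  {x | ∀ j, (fun i => x (j, i)) ∈ Inp j}

/-- Conditional expectation of `g` under `D` given the event `S`. -/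
noncomputable def cExp {γ : Type} [Fintype γ] (D : γ → ℝ) (S : Set γ) (g : γ → ℝ) : ℝ :=
  (∑ x, S.indicator (fun y => D y * g y) x) / prS D S

/-- `ReachV T u Inp t`: the vertex given by the subtree `u`, carrying the per-sample
consistent sets `Inp = (v_1, …, v_K)`, lies in `T` at distance `t` from the root. -/
inductive ReachV {α β : Type} {n K : ℕ} (T : DTreeD α (Fin K × Fin n) β) :
    DTreeD α (Fin K × Fin n) β → (Fin K → Set (Fin n → α)) → ℕ → Prop where
  | root : ReachV T T (fun _ => Set.univ) 0
  | step {p : Fin K × Fin n} {ch : α → DTreeD α (Fin K × Fin n) β}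
      {Inp : Fin K → Set (Fin n → α)} {t : ℕ} (a : α) :
      ReachV T (.node p ch) Inp t →
      ReachV T (ch a) (Function.update Inp p.1 (Inp p.1 ∩ {y | y p.2 = a})) (t + 1)
  | dummy {u : DTreeD α (Fin K × Fin n) β} {Inp : Fin K → Set (Fin n → α)} {t : ℕ} :
      ReachV T (.dummy u) Inp t → ReachV T u Inp (t + 1)

/-- The one-step increment `Δ^t(x) = OTLLR(v^{t+1}) − OTLLR(v^t)` at the vertex `(u, Inp)`,
as a function of the input `x` (it is `0` at dummy vertices, and at a query vertex it is the
change of `OTLLR` caused by the answer to the query read off from `x`). -/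
noncomputable def deltaStep {α β : Type} [Fintype α] {n K : ℕ} (D0 D1 : (Fin n → α) → ℝ)
    (u : DTreeD α (Fin K × Fin n) β) (Inp : Fin K → Set (Fin n → α))
    (x : (Fin K × Fin n) → α) : ℝ :=
  match u with
  | .node p _ =>
      otllr D0 D1 (Function.update Inp p.1 (Inp p.1 ∩ {y | y p.2 = x p})) - otllr D0 D1 Inp
  | _ => 0


section SubmartingaleHelpers

open Finset

lemma prS_nonneg {γ : Type} [Fintype γ] {D : γ → ℝ} (hD : ∀ x, 0 ≤ D x) (S : Set γ) :
    0 ≤ prS D S :=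
  Finset.sum_nonneg fun x _ => Set.indicator_nonneg (fun y _ => hD y) x

lemma key_scalar {s : ℝ} (hs : s ≤ 200) : 1 - Real.exp (-s) ≤ s - 0.001 * s ^ 2 := by
  rcases le_or_gt s 2 with h | h
  · have h1 : 1 - s / 2 ≤ Real.exp (-(s / 2)) := by
      have := Real.add_one_le_exp (-(s / 2)); linarith
    have h0 : (0:ℝ) ≤ 1 - s / 2 := by linarith
    have h2 : (1 - s/2) * (1 - s/2) ≤ Real.exp (-(s/2)) * Real.exp (-(s/2)) :=
      mul_le_mul h1 h1 h0 (Real.exp_pos _).le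
    rw [← Real.exp_add] at h2
    have h3 : -(s/2) + -(s/2) = -s := by ring
    rw [h3] at h2
    nlinarith
  · have := Real.exp_pos (-s)
    nlinarith

lemma indicator_InpSet {α : Type} [Fintype α] {n K : ℕ} (D : (Fin n → α) → ℝ)
    (Inp : Fin K → Set (Fin n → α)) (x : (Fin K × Fin n) → α) :
    (InpSet Inp).indicator (prodD D) x = ∏ j, (Inp j).indicator D (fun i => x (j, i)) := by
  classical
  by_cases hx : x ∈ InpSet Inp
  · rw [Set.indicator_of_mem hx]
    exact Finset.prod_congr rfl fun j _ => (Set.indicator_of_mem (hx j) D).symm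
  · rw [Set.indicator_of_notMem hx]
    simp only [InpSet, Set.mem_setOf_eq, not_forall] at hx
    obtain ⟨j, hj⟩ := hx
    exact (Finset.prod_eq_zero (Finset.mem_univ j) (Set.indicator_of_notMem hj D)).symm

lemma prS_prodD {α : Type} [Fintype α] {n K : ℕ} (D : (Fin n → α) → ℝ)
    (Inp : Fin K → Set (Fin n → α)) :
    prS (prodD D) (InpSet Inp) = ∏ j, prS D (Inp j) := by
  classical
  unfold prS
  rw [Finset.prod_univ_sum, Fintype.piFinset_univ,
    ← Equiv.sum_comp (Equiv.curry (Fin K) (Fin n) α)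
      (fun g => ∏ j, (Inp j).indicator D (g j))]
  exact Finset.sum_congr rfl fun x _ => indicator_InpSet D Inp x

lemma prS_partition {γ : Type} [Fintype γ] {α : Type} [Fintype α] (D : γ → ℝ)
    (S : Set γ) (f : γ → α) :
    ∑ a, prS D (S ∩ {y | f y = a}) = prS D S := by
  classical
  unfold prS
  rw [Finset.sum_comm]
  refine Finset.sum_congr rfl fun y _ => ?_
  have h : ∀ a : α, (S ∩ {z | f z = a}).indicator D y
      = if a = f y then S.indicator D y else 0 := by
    intro a
    simp only [Set.indicator_apply, Set.mem_inter_iff, Set.mem_setOf_eq]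
    by_cases h1 : y ∈ S
    · by_cases h2 : f y = a
      · simp [h1, h2]
      · rw [if_neg (fun h => h2 h.2), if_neg (fun h : a = f y => h2 h.symm)]
    · simp [h1]
  simp_rw [h]
  rw [Finset.sum_ite_eq' Finset.univ (f y) (fun _ => S.indicator D y)]
  simp

lemma otllr_update_sub {α : Type} [Fintype α] {n K : ℕ} (D0 D1 : (Fin n → α) → ℝ)
    (Inp : Fin K → Set (Fin n → α)) (k : Fin K) (S' : Set (Fin n → α)) :
    otllr D0 D1 (Function.update Inp k S') - otllr D0 D1 Inp
      = tllr D0 D1 S' - tllr D0 D1 (Inp k) := by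
  classical
  unfold otllr
  have h1 : ∑ j, tllr D0 D1 (Function.update Inp k S' j)
      = tllr D0 D1 S' + ∑ j ∈ Finset.univ.erase k, tllr D0 D1 (Inp j) := by
    rw [show (fun j => tllr D0 D1 (Function.update Inp k S' j))
        = Function.update (fun j => tllr D0 D1 (Inp j)) k (tllr D0 D1 S') from ?_]
    · rw [Finset.sum_update_of_mem (Finset.mem_univ k)]
      rw [Finset.sdiff_singleton_eq_erase]
    · funext j
      by_cases h : j = k
      · subst h; simp
      · simp [Function.update_of_ne h]
  have h2 : ∑ j, tllr D0 D1 (Inp j)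
      = tllr D0 D1 (Inp k) + ∑ j ∈ Finset.univ.erase k, tllr D0 D1 (Inp j) :=
    (Finset.add_sum_erase _ _ (Finset.mem_univ k)).symm
  rw [h1, h2]; ring

lemma mem_InpSet_update {α : Type} {n K : ℕ} (Inp : Fin K → Set (Fin n → α))
    (p : Fin K × Fin n) (a : α) (x : (Fin K × Fin n) → α) :
    x ∈ InpSet (Function.update Inp p.1 (Inp p.1 ∩ {y | y p.2 = a})) ↔
      x ∈ InpSet Inp ∧ x p = a := by
  classical
  constructor
  · intro h
    have hp := h p.1
    rw [Function.update_self] at hp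
    refine ⟨fun j => ?_, hp.2⟩
    by_cases hj : j = p.1
    · subst hj; exact hp.1
    · have := h j; rwa [Function.update_of_ne hj] at this
  · rintro ⟨h1, h2⟩ j
    by_cases hj : j = p.1
    · subst hj; rw [Function.update_self]
      exact ⟨h1 p.1, h2⟩
    · rw [Function.update_of_ne hj]; exact h1 j

lemma cExp_fiber {α : Type} [Fintype α] {n K : ℕ} (D1 : (Fin n → α) → ℝ)
    (Inp : Fin K → Set (Fin n → α)) (p : Fin K × Fin n) (G : α → ℝ) :
    cExp (prodD D1) (InpSet Inp) (fun x => G (x p)) =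
      (∑ a, G a * prS (prodD D1)
        (InpSet (Function.update Inp p.1 (Inp p.1 ∩ {y | y p.2 = a}))))
        / prS (prodD D1) (InpSet Inp) := by
  classical
  unfold cExp
  congr 1
  have hpt : ∀ x, (InpSet Inp).indicator (fun y => prodD D1 y * G (y p)) x
      = ∑ a, G a * (InpSet (Function.update Inp p.1
          (Inp p.1 ∩ {y | y p.2 = a}))).indicator (prodD D1) x := by
    intro x
    by_cases hx : x ∈ InpSet Inp
    · rw [Set.indicator_of_mem hx]
      have hi : ∀ a, (InpSet (Function.update Inp p.1
          (Inp p.1 ∩ {y | y p.2 = a}))).indicator (prodD D1) x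
          = if x p = a then prodD D1 x else 0 := by
        intro a
        by_cases ha : x p = a
        · rw [Set.indicator_of_mem ((mem_InpSet_update Inp p a x).2 ⟨hx, ha⟩), if_pos ha]
        · rw [Set.indicator_of_notMem
            (fun h => ha ((mem_InpSet_update Inp p a x).1 h).2), if_neg ha]
      simp_rw [hi, mul_ite, mul_zero]
      rw [Finset.sum_ite_eq Finset.univ (x p) (fun a => G a * prodD D1 x)]
      simp [mul_comm]
    · rw [Set.indicator_of_notMem hx]
      symm
      refine Finset.sum_eq_zero fun a _ => ?_
      rw [Set.indicator_of_notMem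
        (fun h => hx ((mem_InpSet_update Inp p a x).1 h).1), mul_zero]
  simp_rw [hpt]
  rw [Finset.sum_comm]
  refine Finset.sum_congr rfl fun a _ => ?_
  rw [← Finset.mul_sum]
  rfl

lemma prS_update_mul {α : Type} [Fintype α] {n K : ℕ} (D1 : (Fin n → α) → ℝ)
    (Inp : Fin K → Set (Fin n → α)) (k : Fin K) (S' : Set (Fin n → α)) :
    prS (prodD D1) (InpSet (Function.update Inp k S')) * prS D1 (Inp k)
      = prS D1 S' * prS (prodD D1) (InpSet Inp) := by
  classical
  rw [prS_prodD, prS_prodD]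
  have h1 : ∏ j, prS D1 (Function.update Inp k S' j)
      = prS D1 S' * ∏ j ∈ Finset.univ.erase k, prS D1 (Inp j) := by
    rw [show (fun j => prS D1 (Function.update Inp k S' j))
        = Function.update (fun j => prS D1 (Inp j)) k (prS D1 S') from ?_]
    · rw [Finset.prod_update_of_mem (Finset.mem_univ k), Finset.sdiff_singleton_eq_erase]
    · funext j
      by_cases h : j = k
      · subst h; simp
      · simp [Function.update_of_ne h]
  have h2 : ∏ j, prS D1 (Inp j)
      = prS D1 (Inp k) * ∏ j ∈ Finset.univ.erase k, prS D1 (Inp j) :=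
    (Finset.mul_prod_erase _ _ (Finset.mem_univ k)).symm
  rw [h1, h2]; ring

end SubmartingaleHelpers

/-- (Sub-martingale property of the progress measure.)  If `T` never
queries a settled sample, then for every non-leaf vertex `v = (u, Inp)` at distance `t`
from the root that is reached with positive probability under `D1^K`:
`E[Δ^t | v^t = v] ≥ 0.001 · E[(Δ^t)² | v^t = v] ≥ 0`. -/
theorem otllr_submartingale {α β : Type} [Fintype α] {n K : ℕ}
    (D0 D1 : (Fin n → α) → ℝ) (hD0 : IsDist D0) (hD1 : IsDist D1)
    (T : DTreeD α (Fin K × Fin n) β)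
    (hsettled : ∀ (p : Fin K × Fin n) (ch : α → DTreeD α (Fin K × Fin n) β)
      (Inp : Fin K → Set (Fin n → α)) (t : ℕ),
      ReachV T (.node p ch) Inp t → ¬ Settled D0 D1 (Inp p.1))
    (u : DTreeD α (Fin K × Fin n) β) (Inp : Fin K → Set (Fin n → α)) (t : ℕ)
    (hreach : ReachV T u Inp t) (hnonleaf : ∀ b, u ≠ .leaf b)
    (hpos : 0 < prS (prodD D1) (InpSet Inp)) :
    (0.001 : ℝ) * cExp (prodD D1) (InpSet Inp) (fun x => (deltaStep D0 D1 u Inp x) ^ 2) ≤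
      cExp (prodD D1) (InpSet Inp) (deltaStep D0 D1 u Inp) ∧
    0 ≤ (0.001 : ℝ) * cExp (prodD D1) (InpSet Inp) (fun x => (deltaStep D0 D1 u Inp x) ^ 2) := by
  classical
  have hD1nn := hD1.1
  have hD0nn := hD0.1
  have hprodnn : ∀ x : (Fin K × Fin n) → α, 0 ≤ prodD D1 x :=
    fun x => Finset.prod_nonneg fun j _ => hD1nn _
  have hsq : 0 ≤ cExp (prodD D1) (InpSet Inp) (fun x => (deltaStep D0 D1 u Inp x) ^ 2) := by
    refine div_nonneg (Finset.sum_nonneg fun x _ => ?_) hpos.le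
    exact Set.indicator_nonneg (fun y _ => mul_nonneg (hprodnn y) (sq_nonneg _)) x
  refine ⟨?_, by nlinarith⟩
  cases u with
  | leaf b => exact absurd rfl (hnonleaf b)
  | dummy u' =>
      have hd : deltaStep D0 D1 (.dummy u') Inp = fun _ => (0:ℝ) := rfl
      have hz : cExp (prodD D1) (InpSet Inp) (fun _ => (0:ℝ)) = 0 := by
        unfold cExp
        simp
      rw [hd]
      have hz2 : (fun x : (Fin K × Fin n) → α => ((0:ℝ)) ^ 2) = fun _ => (0:ℝ) := by
        funext x; norm_num
      rw [hz2, hz]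
      norm_num
  | node p ch =>
      have hns : ¬ Settled D0 D1 (Inp p.1) := hsettled p ch Inp t hreach
      rw [Settled, not_not] at hns
      obtain ⟨hLlo, hLhi⟩ := hns
      set S := Inp p.1 with hSdef
      have hZfac : ∀ j, 0 < prS D1 (Inp j) := by
        intro j
        rcases (prS_nonneg hD1nn (Inp j)).lt_or_eq with h | h
        · exact h
        · exfalso
          have hzero : prS (prodD D1) (InpSet Inp) = 0 := by
            rw [prS_prodD]
            exact Finset.prod_eq_zero (Finset.mem_univ j) h.symm
          rw [hzero] at hpos; exact lt_irrefl 0 hpos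
      have hD1S : 0 < prS D1 S := hZfac p.1
      have hD0S : 0 < prS D0 S := by
        rcases (prS_nonneg hD0nn S).lt_or_eq with h | h
        · exact h
        · exfalso
          rw [LR, ← h, div_zero] at hLlo
          exact (Real.exp_pos _).not_ge hLlo
      have hLRS : 0 < LR D0 D1 S := lt_of_lt_of_le (Real.exp_pos _) hLlo
      have hlogS_le : Real.log (LR D0 D1 S) ≤ 100 :=
        (Real.log_le_iff_le_exp hLRS).2 hLhi
      have hlogS_ge : (-100 : ℝ) ≤ Real.log (LR D0 D1 S) :=
        (Real.le_log_iff_exp_le hLRS).2 hLlo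
      have htS : tllr D0 D1 S = Real.log (LR D0 D1 S) := by
        unfold tllr
        rw [if_pos ⟨hLlo, hLhi⟩]
      set F : α → ℝ := fun a => tllr D0 D1 (S ∩ {y | y p.2 = a}) - tllr D0 D1 S with hFdef
      set q : α → ℝ := fun a => prS D1 (S ∩ {y | y p.2 = a}) / prS D1 S with hqdef
      set p0 : α → ℝ := fun a => prS D0 (S ∩ {y | y p.2 = a}) / prS D0 S with hp0def
      have hdelta : deltaStep D0 D1 (.node p ch) Inp = fun x => F (x p) := by
        funext x
        show otllr D0 D1 (Function.update Inp p.1 (Inp p.1 ∩ {y | y p.2 = x p}))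
            - otllr D0 D1 Inp = F (x p)
        rw [otllr_update_sub D0 D1 Inp p.1]
      have hW : ∀ a, prS (prodD D1)
          (InpSet (Function.update Inp p.1 (Inp p.1 ∩ {y | y p.2 = a})))
          = q a * prS (prodD D1) (InpSet Inp) := by
        intro a
        have h := prS_update_mul D1 Inp p.1 (Inp p.1 ∩ {y | y p.2 = a})
        rw [hqdef]
        field_simp
        linear_combination h
      have hEgen : ∀ G : α → ℝ,
          cExp (prodD D1) (InpSet Inp) (fun x => G (x p)) = ∑ a, q a * G a := by
        intro G
        rw [cExp_fiber D1 Inp p G]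
        simp_rw [hW]
        rw [show (fun a => G a * (q a * prS (prodD D1) (InpSet Inp)))
            = fun a => (q a * G a) * prS (prodD D1) (InpSet Inp) from by
          funext a; ring]
        rw [← Finset.sum_mul, mul_div_assoc, div_self hpos.ne', mul_one]
      have hE1 : cExp (prodD D1) (InpSet Inp) (deltaStep D0 D1 (.node p ch) Inp)
          = ∑ a, q a * F a := by
        rw [hdelta]; exact hEgen F
      have hE2 : cExp (prodD D1) (InpSet Inp)
          (fun x => (deltaStep D0 D1 (.node p ch) Inp x) ^ 2)
          = ∑ a, q a * (F a) ^ 2 := by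
        rw [hdelta]; exact hEgen (fun a => (F a) ^ 2)
      rw [hE1, hE2]
      -- sums to one
      have hq1 : ∑ a, q a = 1 := by
        rw [hqdef]
        rw [← Finset.sum_div, prS_partition D1 S (fun y => y p.2), div_self hD1S.ne']
      have hp1 : ∑ a, p0 a = 1 := by
        rw [hp0def]
        rw [← Finset.sum_div, prS_partition D0 S (fun y => y p.2), div_self hD0S.ne']
      have hqnn : ∀ a, 0 ≤ q a :=
        fun a => div_nonneg (prS_nonneg hD1nn _) hD1S.le
      have hp0nn : ∀ a, 0 ≤ p0 a :=
        fun a => div_nonneg (prS_nonneg hD0nn _) hD0S.le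
      -- pointwise key inequality
      have hkey : ∀ a, q a - p0 a ≤ q a * F a - 0.001 * (q a * (F a) ^ 2) := by
        intro a
        set Sa := S ∩ {y | y p.2 = a} with hSadef
        by_cases hset : Real.exp (-100) ≤ LR D0 D1 Sa ∧ LR D0 D1 Sa ≤ Real.exp 100
        · -- unsettled child
          obtain ⟨halo, hahi⟩ := hset
          by_cases hq0 : prS D1 Sa = 0
          · have hqa : q a = 0 := by rw [hqdef]; simp [← hSadef, hq0]
            rw [hqa]
            simp only [zero_mul, mul_zero, zero_sub, sub_zero]
            norm_num
            exact hp0nn a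
          · have hD1Sa : 0 < prS D1 Sa :=
              lt_of_le_of_ne (prS_nonneg hD1nn Sa) (Ne.symm hq0)
            have hD0Sa : 0 < prS D0 Sa := by
              rcases (prS_nonneg hD0nn Sa).lt_or_eq with h | h
              · exact h
              · exfalso
                rw [LR, ← h, div_zero] at halo
                exact (Real.exp_pos _).not_ge halo
            have hLRa : 0 < LR D0 D1 Sa := div_pos hD1Sa hD0Sa
            have htSa : tllr D0 D1 Sa = Real.log (LR D0 D1 Sa) := by
              unfold tllr
              rw [if_pos ⟨halo, hahi⟩]
            have hloga_le : Real.log (LR D0 D1 Sa) ≤ 100 :=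
              (Real.log_le_iff_le_exp hLRa).2 hahi
            have hFa : F a = Real.log (LR D0 D1 Sa) - Real.log (LR D0 D1 S) := by
              rw [hFdef]; simp only [← hSadef]; rw [htSa, htS]
            have hs200 : F a ≤ 200 := by rw [hFa]; linarith
            have hexp : Real.exp (-(F a)) * q a = p0 a := by
              rw [hFa, neg_sub, Real.exp_sub, Real.exp_log hLRS, Real.exp_log hLRa]
              rw [hqdef, hp0def]
              simp only [← hSadef]
              rw [LR, LR]
              field_simp
            have hks := key_scalar hs200
            have hmul : q a * (1 - Real.exp (-(F a))) ≤ q a * (F a - 0.001 * (F a) ^ 2) :=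
              mul_le_mul_of_nonneg_left hks (hqnn a)
            nlinarith [hmul, hexp]
        · -- settled child: tllr = 500
          have htSa : tllr D0 D1 Sa = 500 := by
            unfold tllr
            rw [if_neg hset]
          have hFa : F a = 500 - Real.log (LR D0 D1 S) := by
            rw [hFdef]; simp only [← hSadef]; rw [htSa, htS]
          have hF4 : 400 ≤ F a := by rw [hFa]; linarith
          have hF6 : F a ≤ 600 := by rw [hFa]; linarith
          have h1 : (1:ℝ) ≤ F a - 0.001 * (F a) ^ 2 := by nlinarith
          nlinarith [mul_le_mul_of_nonneg_left h1 (hqnn a), hqnn a, hp0nn a]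
      have hsum := Finset.sum_le_sum (fun a (_ : a ∈ Finset.univ) => hkey a)
      rw [Finset.sum_sub_distrib, Finset.sum_sub_distrib, ← Finset.mul_sum,
        hq1, hp1] at hsum
      linarith
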